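/- With the same hypotheses, for any measurement vector M ∈ ℝⁿ, the quantity R = Mᵀ (∫₀^∞ exp(Ls) σ²ζζᵀ exp(Ls) ds) M equals σ² Σ_{i=2}^n Σ_{j=2}^n (-1/(λ_i+λ_j)) (Mᵀv_i)(v_iᵀζ)(ζᵀv_j)(v_jᵀM), and R ≥ 0. -/

import Mathlib

open Matrix MeasureTheory

lemma intExpIoi {c : ℝ} (hc : c < 0) :
    ∫ s in Set.Ioi (0:ℝ), Real.exp (c * s) = -1 / c := by
  have hb : 0 < -c := by linarith
  have hint : IntegrableOn (fun s : ℝ => Real.exp (c * s)) (Set.Ioi 0) := by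
    have := exp_neg_integrableOn_Ioi 0 hb
    simpa [neg_mul, neg_neg] using this
  have hderiv : ∀ x ∈ Set.Ici (0:ℝ),
      HasDerivAt (fun s : ℝ => c⁻¹ * Real.exp (c * s)) (Real.exp (c * x)) x := by
    intro x _
    have h1 : HasDerivAt (fun s : ℝ => c * s) c x := by
      simpa using (hasDerivAt_id x).const_mul c
    have h2 := (Real.hasDerivAt_exp (c * x)).comp x h1
    have h3 := h2.const_mul c⁻¹
    refine h3.congr_deriv ?_
    field_simp [ne_of_lt hc]
  have htend : Filter.Tendsto (fun s : ℝ => c⁻¹ * Real.exp (c * s)) Filter.atTop (nhds 0) := by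
    have h1 : Filter.Tendsto (fun s : ℝ => c * s) Filter.atTop Filter.atBot := by
      simpa using Filter.Tendsto.const_mul_atTop_of_neg (by linarith : c < 0) Filter.tendsto_id
    have h2 := Real.tendsto_exp_atBot.comp h1
    simpa using h2.const_mul c⁻¹
  have := integral_Ioi_of_hasDerivAt_of_tendsto' hderiv hint htend
  rw [this]
  simp [Real.exp_zero]
  field_simp


lemma ortho_expand {n : ℕ} [NeZero n] (v : Fin n → Fin n → ℝ)
    (horth : ∀ i j, v i ⬝ᵥ v j = if i = j then 1 else 0) (x : Fin n → ℝ) :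
    x = ∑ i, (v i ⬝ᵥ x) • v i := by
  let E := EuclideanSpace ℝ (Fin n)
  let w : Fin n → E := fun i => (WithLp.equiv 2 _).symm (v i)
  have hinner : ∀ (a b : Fin n → ℝ),
      (inner ℝ ((WithLp.equiv 2 (Fin n → ℝ)).symm a) ((WithLp.equiv 2 (Fin n → ℝ)).symm b) : ℝ)
        = a ⬝ᵥ b := by
    intro a b
    rw [PiLp.inner_apply]
    simp [dotProduct, mul_comm]
  have hon : Orthonormal ℝ w := by
    rw [orthonormal_iff_ite]
    intro i j
    rw [hinner, horth]
  have hcard : Fintype.card (Fin n) = Module.finrank ℝ E := by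
    simp [E]
  let b : Module.Basis (Fin n) ℝ E := basisOfLinearIndependentOfCardEqFinrank hon.linearIndependent hcard
  have hb : ∀ i, b i = w i := fun i => by
    rw [coe_basisOfLinearIndependentOfCardEqFinrank]
  set x' : E := (WithLp.equiv 2 _).symm x with hx'
  have honite : ∀ i j, (inner ℝ (w i) (w j) : ℝ) = if i = j then 1 else 0 :=
    orthonormal_iff_ite.mp hon
  have hrepr : ∀ j, b.repr x' j = v j ⬝ᵥ x := by
    intro j
    have h1 : x' = ∑ i, b.repr x' i • b i := (b.sum_repr x').symm
    have h2 : (inner ℝ (w j) x' : ℝ) = b.repr x' j := by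
      conv_lhs => rw [h1]
      rw [inner_sum]
      rw [Finset.sum_eq_single j]
      · rw [hb, real_inner_smul_right, honite]; simp
      · intro i _ hij
        rw [hb, real_inner_smul_right, honite]; simp [hij, Ne.symm hij]
      · intro h; exact absurd (Finset.mem_univ j) h
    rw [← h2, hx']
    exact hinner (v j) x
  have hmain : x' = ∑ i, (v i ⬝ᵥ x) • w i := by
    conv_lhs => rw [(b.sum_repr x').symm]
    congr 1
    funext i
    rw [hrepr, hb]
  have := congrArg (WithLp.equiv 2 (Fin n → ℝ)) hmain
  simp [hx', w] at this
  rw [WithLp.ofLp_sum] at this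
  exact this.trans (Finset.sum_congr rfl fun i _ => rfl)


lemma exp_mulVec_eig {n : ℕ} (A : Matrix (Fin n) (Fin n) ℝ) (w : Fin n → ℝ) (μ : ℝ)
    (h : A.mulVec w = μ • w) :
    (NormedSpace.exp A).mulVec w = Real.exp μ • w := by
  letI : NormedAddCommGroup (Matrix (Fin n) (Fin n) ℝ) := Matrix.linftyOpNormedAddCommGroup
  letI : NormedRing (Matrix (Fin n) (Fin n) ℝ) := Matrix.linftyOpNormedRing
  letI : NormedAlgebra ℝ (Matrix (Fin n) (Fin n) ℝ) := Matrix.linftyOpNormedAlgebra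
  have hpow : ∀ k : ℕ, (A ^ k).mulVec w = μ ^ k • w := by
    intro k
    induction k with
    | zero => simp [Matrix.one_mulVec]
    | succ k ih =>
        rw [pow_succ', pow_succ', ← Matrix.mulVec_mulVec, ih, Matrix.mulVec_smul, h,
          smul_smul, mul_comm]
  let f : Matrix (Fin n) (Fin n) ℝ →ₗ[ℝ] (Fin n → ℝ) :=
    { toFun := fun B => B.mulVec w
      map_add' := fun B C => Matrix.add_mulVec B C w
      map_smul' := fun c B => Matrix.smul_mulVec c B w }
  have hsum : Summable (fun k : ℕ => ((k.factorial : ℝ))⁻¹ • A ^ k) :=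
    NormedSpace.expSeries_summable' A
  have hmap : (NormedSpace.exp A).mulVec w
      = ∑' k : ℕ, ((k.factorial : ℝ))⁻¹ • (A ^ k).mulVec w := by
    rw [NormedSpace.exp_eq_tsum ℝ]
    have := (f.toContinuousLinearMap : Matrix (Fin n) (Fin n) ℝ →L[ℝ] (Fin n → ℝ)).map_tsum hsum
    simpa [f] using this
  rw [hmap]
  have hsum2 : Summable (fun k : ℕ => ((k.factorial : ℝ))⁻¹ * μ ^ k) :=
    NormedSpace.expSeries_summable' (𝕂 := ℝ) μ
  calc (∑' k : ℕ, ((k.factorial : ℝ))⁻¹ • (A ^ k).mulVec w)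
      = ∑' k : ℕ, (((k.factorial : ℝ))⁻¹ * μ ^ k) • w := by
        congr 1; funext k; rw [hpow k, smul_smul]
    _ = (∑' k : ℕ, ((k.factorial : ℝ))⁻¹ * μ ^ k) • w := by
        exact hsum2.tsum_smul_const w
    _ = Real.exp μ • w := by
        rw [Real.exp_eq_exp_ℝ, NormedSpace.exp_eq_tsum ℝ]
        simp [smul_eq_mul]

theorem stmt_6 (n : ℕ) [NeZero n] (L : Matrix (Fin n) (Fin n) ℝ) (hsym : L.IsSymm)
    (lam : Fin n → ℝ) (v : Fin n → Fin n → ℝ)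
    (heig : ∀ i, L.mulVec (v i) = lam i • v i)
    (horth : ∀ i j, v i ⬝ᵥ v j = if i = j then 1 else 0)
    (hlam0 : lam 0 = 0) (hlamneg : ∀ i, i ≠ 0 → lam i < 0)
    (ζ : Fin n → ℝ) (hζ : v 0 ⬝ᵥ ζ = 0)
    (σ : ℝ) (M : Fin n → ℝ)
    (R : ℝ)
    (hR : R = ∫ s in Set.Ioi (0:ℝ),
      M ⬝ᵥ ((NormedSpace.exp (s • L) * (σ ^ 2 • Matrix.vecMulVec ζ ζ) *
        NormedSpace.exp (s • L)).mulVec M)) :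
    R = σ ^ 2 * ∑ i ∈ Finset.univ.filter (fun i : Fin n => i ≠ 0),
          ∑ j ∈ Finset.univ.filter (fun j : Fin n => j ≠ 0),
            (-1) / (lam i + lam j) * (M ⬝ᵥ v i) * (v i ⬝ᵥ ζ) * (ζ ⬝ᵥ v j) * (v j ⬝ᵥ M)
      ∧ 0 ≤ R := by
  set S : Finset (Fin n) := Finset.univ.filter (fun i : Fin n => i ≠ 0) with hS
  set E : ℝ → Matrix (Fin n) (Fin n) ℝ := fun s => NormedSpace.exp (s • L) with hEdef
  have hE : ∀ (s : ℝ) (i : Fin n), (E s).mulVec (v i) = Real.exp (s * lam i) • v i := by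
    intro s i
    apply exp_mulVec_eig
    rw [Matrix.smul_mulVec, heig, smul_smul]
  have hEsym : ∀ s : ℝ, (E s)ᵀ = E s := by
    intro s
    have h1 : (s • L).IsSymm := by
      show (s • L)ᵀ = s • L
      rw [Matrix.transpose_smul, hsym]
    exact h1.exp
  have hζexp := ortho_expand v horth ζ
  have hEζ : ∀ s : ℝ, (E s).mulVec ζ = ∑ i, ((v i ⬝ᵥ ζ) * Real.exp (s * lam i)) • v i := by
    intro s
    conv_lhs => rw [hζexp]
    rw [show (E s).mulVec (∑ i, (v i ⬝ᵥ ζ) • v i)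
        = ∑ i, (E s).mulVec ((v i ⬝ᵥ ζ) • v i) from by
      rw [← Matrix.mulVecLin_apply, map_sum]
      simp only [Matrix.mulVecLin_apply]]
    congr 1; funext i
    rw [Matrix.mulVec_smul, hE, smul_smul]
  -- dotProduct with a sum
  have hds : ∀ (x : Fin n → ℝ) (u : Fin n → Fin n → ℝ),
      x ⬝ᵥ (∑ i, u i) = ∑ i, x ⬝ᵥ u i := by
    intro x u
    simp only [dotProduct, Finset.sum_apply, Finset.mul_sum]
    rw [Finset.sum_comm]
  have hMEζ : ∀ s : ℝ, M ⬝ᵥ (E s).mulVec ζ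
      = ∑ i ∈ S, (v i ⬝ᵥ ζ) * Real.exp (s * lam i) * (M ⬝ᵥ v i) := by
    intro s
    rw [hEζ, hds]
    have h1 : ∀ i : Fin n, M ⬝ᵥ ((v i ⬝ᵥ ζ * Real.exp (s * lam i)) • v i)
        = v i ⬝ᵥ ζ * Real.exp (s * lam i) * (M ⬝ᵥ v i) := by
      intro i
      rw [dotProduct_smul, smul_eq_mul, mul_assoc]
    simp only [h1]
    have hzero : ∀ i ∈ (Finset.univ : Finset (Fin n)),
        v i ⬝ᵥ ζ * Real.exp (s * lam i) * (M ⬝ᵥ v i) ≠ 0 → i ≠ 0 := by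
      intro i _ hne
      rintro rfl
      rw [hζ] at hne
      simp at hne
    rw [hS, Finset.sum_filter_of_ne hzero]
  -- pointwise formula for the integrand
  have hF : ∀ s : ℝ, M ⬝ᵥ ((E s * (σ ^ 2 • Matrix.vecMulVec ζ ζ) * E s).mulVec M)
      = σ ^ 2 * (M ⬝ᵥ (E s).mulVec ζ) * (M ⬝ᵥ (E s).mulVec ζ) := by
    intro s
    have hZ : ∀ y : Fin n → ℝ, (σ ^ 2 • Matrix.vecMulVec ζ ζ).mulVec y
        = (σ ^ 2 * (ζ ⬝ᵥ y)) • ζ := by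
      intro y
      funext i
      simp [Matrix.mulVec, Matrix.vecMulVec_apply, dotProduct, Finset.mul_sum,
        mul_assoc, mul_comm, mul_left_comm]
    have hswap : ζ ⬝ᵥ (E s).mulVec M = M ⬝ᵥ (E s).mulVec ζ := by
      rw [Matrix.dotProduct_mulVec, ← Matrix.mulVec_transpose, hEsym, dotProduct_comm]
    rw [← Matrix.mulVec_mulVec, ← Matrix.mulVec_mulVec, hZ, Matrix.mulVec_smul,
      dotProduct_smul, smul_eq_mul, hswap]
  -- nonnegativity
  have hnonneg : 0 ≤ R := by
    rw [hR]
    apply setIntegral_nonneg measurableSet_Ioi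
    intro s _
    rw [hF, mul_assoc]
    have h2 := mul_self_nonneg (M ⬝ᵥ (E s).mulVec ζ)
    positivity
  refine ⟨?_, hnonneg⟩
  -- termwise integrand
  have hSneg : ∀ i ∈ S, ∀ j ∈ S, lam i + lam j < 0 := by
    intro i hi j hj
    rw [hS, Finset.mem_filter] at hi hj
    have := hlamneg i hi.2
    have := hlamneg j hj.2
    linarith
  set K : Fin n → Fin n → ℝ := fun i j =>
    σ ^ 2 * ((v i ⬝ᵥ ζ) * (M ⬝ᵥ v i) * ((v j ⬝ᵥ ζ) * (M ⬝ᵥ v j))) with hK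
  have hFexp : ∀ s : ℝ, M ⬝ᵥ ((E s * (σ ^ 2 • Matrix.vecMulVec ζ ζ) * E s).mulVec M)
      = ∑ i ∈ S, ∑ j ∈ S, K i j * Real.exp ((lam i + lam j) * s) := by
    intro s
    rw [hF, hMEζ, mul_assoc, Finset.sum_mul_sum, Finset.mul_sum]
    apply Finset.sum_congr rfl; intro i _
    rw [Finset.mul_sum]
    apply Finset.sum_congr rfl; intro j _
    simp only [hK]
    rw [add_mul, Real.exp_add]
    ring_nf
  have hint : ∀ i ∈ S, ∀ j ∈ S,
      IntegrableOn (fun s : ℝ => K i j * Real.exp ((lam i + lam j) * s)) (Set.Ioi 0) := by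
    intro i hi j hj
    have hb : 0 < -(lam i + lam j) := by linarith [hSneg i hi j hj]
    have := (exp_neg_integrableOn_Ioi 0 hb).const_mul (K i j)
    simp only [neg_neg] at this
    exact this
  have hval : ∀ i ∈ S, ∀ j ∈ S,
      ∫ s in Set.Ioi (0:ℝ), K i j * Real.exp ((lam i + lam j) * s)
        = K i j * (-1 / (lam i + lam j)) := by
    intro i hi j hj
    rw [MeasureTheory.integral_const_mul, intExpIoi (hSneg i hi j hj)]
  rw [hR]
  calc (∫ s in Set.Ioi (0:ℝ),
      M ⬝ᵥ ((E s * (σ ^ 2 • Matrix.vecMulVec ζ ζ) * E s).mulVec M))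
      = ∫ s in Set.Ioi (0:ℝ), ∑ i ∈ S, ∑ j ∈ S, K i j * Real.exp ((lam i + lam j) * s) := by
        congr 1; funext s; exact hFexp s
    _ = ∑ i ∈ S, ∫ s in Set.Ioi (0:ℝ), ∑ j ∈ S, K i j * Real.exp ((lam i + lam j) * s) := by
        apply MeasureTheory.integral_finset_sum
        intro i hi
        exact MeasureTheory.integrable_finset_sum _ (fun j hj => hint i hi j hj)
    _ = ∑ i ∈ S, ∑ j ∈ S, ∫ s in Set.Ioi (0:ℝ), K i j * Real.exp ((lam i + lam j) * s) := by
        apply Finset.sum_congr rfl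
        intro i hi
        exact MeasureTheory.integral_finset_sum _ (fun j hj => hint i hi j hj)
    _ = ∑ i ∈ S, ∑ j ∈ S, K i j * (-1 / (lam i + lam j)) := by
        apply Finset.sum_congr rfl; intro i hi
        apply Finset.sum_congr rfl; intro j hj
        exact hval i hi j hj
    _ = σ ^ 2 * ∑ i ∈ S, ∑ j ∈ S,
          (-1) / (lam i + lam j) * (M ⬝ᵥ v i) * (v i ⬝ᵥ ζ) * (ζ ⬝ᵥ v j) * (v j ⬝ᵥ M) := by
        rw [Finset.mul_sum]
        apply Finset.sum_congr rfl; intro i _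
        rw [Finset.mul_sum]
        apply Finset.sum_congr rfl; intro j _
        rw [hK, dotProduct_comm ζ (v j), dotProduct_comm (v j) M]
        ring
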